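/- Let X be a connected compact Hausdorff space with more than one point, e.g. X = [0,1]. Then C(X, ℂ) is not approximable by jointly non-degenerate products: there exist f, g ∈ C(X) and ε > 0 such that no jointly non-degenerate pair (f', g') with ‖f−f'‖, ‖g−g'‖ < ε satisfies f g = f' g'. -/

import Mathlib

/-- For a connected compact Hausdorff space with more than one point, `C(X, ℂ)` is *not*
approximable by jointly non-degenerate products. -/
theorem stmt_11 (X : Type*) [TopologicalSpace X] [CompactSpace X] [T2Space X]
    [ConnectedSpace X] [Nontrivial X] :
    ∃ (f g : C(X, ℂ)) (ε : ℝ), 0 < ε ∧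
      ∀ f' g' : C(X, ℂ), ‖f - f'‖ < ε → ‖g - g'‖ < ε → f * g = f' * g' →
        ¬ ∃ η : ℝ, 0 < η ∧ ∀ x : X,
            η ≤ (‖f' x‖) ^ 2 + (‖g' x‖) ^ 2 := by
  obtain ⟨a, b, hab⟩ := exists_pair_ne X
  obtain ⟨u, hua, hub, hu01⟩ := exists_continuous_zero_one_of_isClosed
    (isClosed_singleton (x := a)) (isClosed_singleton (x := b))
    (by simpa using hab)
  have hua' : u a = 0 := hua rfl
  have hub' : u b = 1 := hub rfl
  set p : C(X, ℝ) := (ContinuousMap.const X (1/2) - u) ⊔ 0 with hp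
  set q : C(X, ℝ) := (u - ContinuousMap.const X (1/2)) ⊔ 0 with hq
  have hpq : ∀ x, p x * q x = 0 := by
    intro x
    by_cases h : u x ≤ 1/2
    · have : q x = 0 := by
        simp only [hq, ContinuousMap.sup_apply, ContinuousMap.sub_apply,
          ContinuousMap.const_apply, ContinuousMap.zero_apply]
        rw [sup_eq_right]
        linarith
      simp [this]
    · have : p x = 0 := by
        simp only [hp, ContinuousMap.sup_apply, ContinuousMap.sub_apply,
          ContinuousMap.const_apply, ContinuousMap.zero_apply]
        rw [sup_eq_right]
        linarith
      simp [this]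
  have hpa : p a = 1/2 := by
    simp only [hp, ContinuousMap.sup_apply, ContinuousMap.sub_apply,
      ContinuousMap.const_apply, ContinuousMap.zero_apply, hua']
    norm_num
  have hqb : q b = 1/2 := by
    simp only [hq, ContinuousMap.sup_apply, ContinuousMap.sub_apply,
      ContinuousMap.const_apply, ContinuousMap.zero_apply, hub']
    norm_num
  set R : C(ℝ, ℂ) := ⟨Complex.ofReal, Complex.continuous_ofReal⟩ with hR
  refine ⟨R.comp p, R.comp q, 1/2, by norm_num, ?_⟩
  intro f' g' hf hg hprod ⟨η, hη, hall⟩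
  have hprod0 : ∀ x, f' x * g' x = 0 := by
    intro x
    have := congrFun (congrArg DFunLike.coe hprod) x
    simp only [ContinuousMap.mul_apply, ContinuousMap.comp_apply, hR,
      ContinuousMap.coe_mk] at this
    rw [← this, ← Complex.ofReal_mul, hpq x, Complex.ofReal_zero]
  -- the zero sets of f' and g' are complementary
  have hcompl : {x | f' x = 0} = {x | g' x = 0}ᶜ := by
    ext x
    simp only [Set.mem_setOf_eq, Set.mem_compl_iff]
    constructor
    · intro h h'
      have := hall x
      rw [h, h'] at this
      simp at this
      linarith
    · intro h
      rcases mul_eq_zero.mp (hprod0 x) with h' | h'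
      · exact h'
      · exact absurd h' h
  have hclopen : IsClopen {x | f' x = 0} := by
    constructor
    · exact isClosed_eq (map_continuous f') continuous_const
    · rw [hcompl]
      exact (isClosed_eq (map_continuous g') continuous_const).isOpen_compl
  rcases isClopen_iff.mp hclopen with h | h
  · -- f' never zero, so g' ≡ 0, contradicting ‖g - g'‖ < 1/2
    have hg0 : ∀ x, g' x = 0 := by
      intro x
      rcases mul_eq_zero.mp (hprod0 x) with h' | h'
      · have hx : x ∈ {x | f' x = 0} := h'
        rw [h] at hx
        exact hx.elim
      · exact h'
    have : (1/2 : ℝ) ≤ ‖R.comp q - g'‖ := by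
      have hb : ‖(R.comp q - g') b‖ ≤ ‖R.comp q - g'‖ :=
        ContinuousMap.norm_coe_le_norm _ b
      have : ‖(R.comp q - g') b‖ = 1/2 := by
        simp [hR, hg0 b, hqb]
      linarith
    linarith
  · -- f' ≡ 0, contradicting ‖f - f'‖ < 1/2
    have hf0 : ∀ x, f' x = 0 := fun x => by
      have : x ∈ {x | f' x = 0} := h ▸ Set.mem_univ x
      exact this
    have : (1/2 : ℝ) ≤ ‖R.comp p - f'‖ := by
      have ha : ‖(R.comp p - f') a‖ ≤ ‖R.comp p - f'‖ :=
        ContinuousMap.norm_coe_le_norm _ a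
      have : ‖(R.comp p - f') a‖ = 1/2 := by
        simp [hR, hf0 a, hpa]
      linarith
    linarith
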